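/- For every integer m ≥ 2, the two-generator Artin group G_m = ⟨a₁, a₂ ∣ (a₁,a₂)_m = (a₂,a₁)_m⟩ is isomorphic to the group I_m = ⟨x, a₁, a₂, …, a_m ∣ x = a₁a₂, x = a₂a₃, …, x = a_m a₁⟩. -/
import Mathlib


/-- The alternating word `xyxy…` with exactly `n` letters, starting with `x`. -/
def altWord {M : Type*} [Monoid M] (x y : M) : ℕ → M
  | 0 => 1
  | n + 1 => x * altWord y x n

namespace ArtinAux
variable {G : Type*} [Group G] {H : Type*} [Group H]

def gs (a b : G) : ℕ → G
  | 0 => a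
  | 1 => b
  | n + 2 => (a*b)⁻¹ * gs a b n * (a*b)

@[simp] lemma gs_zero (a b : G) : gs a b 0 = a := rfl
@[simp] lemma gs_one (a b : G) : gs a b 1 = b := rfl
lemma gs_step (a b : G) (n : ℕ) : gs a b (n+2) = (a*b)⁻¹ * gs a b n * (a*b) := rfl

lemma gs_chain (a b : G) (n : ℕ) : gs a b n * gs a b (n+1) = a * b := by
  induction n using Nat.twoStepInduction with
  | zero => simp
  | one => show b * ((a*b)⁻¹ * a * (a*b)) = a * b; group
  | more n ih _ =>
    show ((a*b)⁻¹ * gs a b n * (a*b)) * ((a*b)⁻¹ * gs a b (n+1) * (a*b)) = a*b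
    calc ((a*b)⁻¹ * gs a b n * (a*b)) * ((a*b)⁻¹ * gs a b (n+1) * (a*b))
        = (a*b)⁻¹ * (gs a b n * gs a b (n+1)) * (a*b) := by group
      _ = a*b := by rw [ih]; group

lemma conj_pow' (a b : G) (k : ℕ) : (b*a)^k = a⁻¹ * (a*b)^k * a := by
  induction k with
  | zero => group
  | succ n ih => rw [pow_succ, pow_succ, ih]; group

lemma gs_even (a b : G) (k : ℕ) : gs a b (2*k) = ((a*b)^k)⁻¹ * a * (a*b)^k := by
  induction k with
  | zero => simp
  | succ n ih =>
    have h : 2*(n+1) = 2*n + 2 := by ring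
    rw [h, gs_step, ih, pow_succ]
    generalize (a*b)^n = P
    group

lemma gs_odd (a b : G) (k : ℕ) : gs a b (2*k+1) = ((a*b)^k)⁻¹ * b * (a*b)^k := by
  induction k with
  | zero => simp
  | succ n ih =>
    have h : 2*(n+1)+1 = (2*n+1) + 2 := by ring
    rw [h, gs_step, ih, pow_succ]
    generalize (a*b)^n = P
    group

lemma altWord_two_step (a b : G) (n : ℕ) :
    altWord a b (n+2) = (a*b) * altWord a b n := by
  show a * (b * altWord a b n) = _
  group

lemma altWord_even (a b : G) (k : ℕ) : altWord a b (2*k) = (a*b)^k := by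
  induction k with
  | zero => simp [altWord]
  | succ n ih =>
    have h : 2*(n+1) = 2*n + 2 := by ring
    rw [h, altWord_two_step, ih, pow_succ']

lemma altWord_odd (a b : G) (k : ℕ) : altWord a b (2*k+1) = (a*b)^k * a := by
  induction k with
  | zero => simp [altWord]
  | succ n ih =>
    have h : 2*(n+1)+1 = (2*n+1) + 2 := by ring
    rw [h, altWord_two_step, ih, pow_succ']
    group

lemma key (a b : G) (m : ℕ) :
    altWord a b m = altWord b a m ↔ gs a b m = a := by
  rcases Nat.even_or_odd m with ⟨k, hk⟩ | ⟨k, hk⟩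
  · have hk' : m = 2*k := by omega
    subst hk'
    rw [altWord_even, altWord_even, gs_even, conj_pow' a b k,
      mul_assoc _ ((a*b)^k) a, eq_inv_mul_iff_mul_eq,
      mul_assoc _ a ((a*b)^k), inv_mul_eq_iff_eq_mul]
  · subst hk
    rw [altWord_odd, altWord_odd, gs_odd, conj_pow' a b k]
    have hPX : (a*b)^k * (a*b) = (a*b) * (a*b)^k := by
      rw [← pow_succ, ← pow_succ']
    have h2 : a⁻¹ * (a*b)^k * a * b = b * (a*b)^k := by
      generalize (a*b)^k = P at hPX ⊢
      calc a⁻¹ * P * a * b = a⁻¹ * (P * (a*b)) := by group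
        _ = a⁻¹ * ((a*b) * P) := by rw [hPX]
        _ = b * P := by group
    rw [h2, mul_assoc _ b ((a*b)^k), inv_mul_eq_iff_eq_mul]
    exact eq_comm

lemma map_altWord (f : G →* H) (a b : G) (n : ℕ) :
    f (altWord a b n) = altWord (f a) (f b) n := by
  induction n generalizing a b with
  | zero => simp [altWord]
  | succ n ih => show f (a * altWord b a n) = f a * altWord (f b) (f a) n
                 rw [map_mul, ih]

lemma map_gs (f : G →* H) (a b : G) (n : ℕ) :
    f (gs a b n) = gs (f a) (f b) n := by
  induction n using Nat.twoStepInduction with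
  | zero => simp
  | one => simp
  | more n ih _ => rw [gs_step, gs_step, map_mul, map_mul, map_inv, map_mul, ih]

lemma mk_rel {α : Type*} (rels : Set (FreeGroup α)) {r : FreeGroup α} (h : r ∈ rels) :
    PresentedGroup.mk rels r = 1 :=
  (QuotientGroup.eq_one_iff _).2 (Subgroup.subset_normalClosure h)

end ArtinAux

/-- Cyclic successor on `Fin m`. -/
def finCycSucc {m : ℕ} (i : Fin m) : Fin m :=
  ⟨(i.val + 1) % m, Nat.mod_lt _ i.pos⟩

/-- The relations of the presentation
`I_m = ⟨x, a₁, …, a_m ∣ x = a₁a₂, x = a₂a₃, …, x = a_m a₁⟩`,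
where `Sum.inl i` is the generator `a_{i+1}` (for `i : Fin m`) and `Sum.inr ()` is `x`. -/
def IRels (m : ℕ) : Set (FreeGroup (Fin m ⊕ Unit)) :=
  {r | ∃ i : Fin m,
    r = FreeGroup.of (Sum.inr ()) *
      (FreeGroup.of (Sum.inl i) * FreeGroup.of (Sum.inl (finCycSucc i)))⁻¹}

/-- For every integer `m ≥ 2`, the two-generator Artin group
`G_m = ⟨a₁, a₂ ∣ (a₁,a₂)_m = (a₂,a₁)_m⟩` is isomorphic to
`I_m = ⟨x, a₁, a₂, …, a_m ∣ x = a₁a₂, x = a₂a₃, …, x = a_m a₁⟩`. -/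
theorem artin_Gm_iso_Im (m : ℕ) (hm : 2 ≤ m) :
    Nonempty
      ((PresentedGroup
          ({altWord (FreeGroup.of 0) (FreeGroup.of 1) m *
              (altWord (FreeGroup.of 1) (FreeGroup.of 0) m)⁻¹} : Set (FreeGroup (Fin 2)))) ≃*
        PresentedGroup (IRels m)) := by
  classical
  open ArtinAux in
  set Grels : Set (FreeGroup (Fin 2)) :=
    ({altWord (FreeGroup.of 0) (FreeGroup.of 1) m *
        (altWord (FreeGroup.of 1) (FreeGroup.of 0) m)⁻¹} : Set (FreeGroup (Fin 2))) with hGrels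
  have hm0 : 0 < m := by omega
  -- notation
  set A : PresentedGroup Grels := PresentedGroup.of 0 with hA
  set B : PresentedGroup Grels := PresentedGroup.of 1 with hB
  set Hfun : ℕ → PresentedGroup (IRels m) :=
    fun n => PresentedGroup.of (Sum.inl ⟨n % m, Nat.mod_lt _ hm0⟩) with hHfun
  set xI : PresentedGroup (IRels m) := PresentedGroup.of (Sum.inr ()) with hxI
  -- the Artin relation in the G-group
  have grel : altWord A B m = altWord B A m := by
    have h1 := ArtinAux.mk_rel Grels (show _ ∈ Grels from rfl)
    rw [map_mul, map_inv, mul_inv_eq_one, ArtinAux.map_altWord, ArtinAux.map_altWord] at h1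
    exact h1
  -- the relations in the I-group
  have irel : ∀ i : Fin m, (PresentedGroup.of (Sum.inl i) : PresentedGroup (IRels m)) *
      PresentedGroup.of (Sum.inl (finCycSucc i)) = xI := by
    intro i
    have h1 := ArtinAux.mk_rel (IRels m) (show _ ∈ IRels m from ⟨i, rfl⟩)
    rw [map_mul, map_inv, mul_inv_eq_one, map_mul] at h1
    exact h1.symm
  have Hchain : ∀ n : ℕ, Hfun n * Hfun (n+1) = xI := by
    intro n
    have h1 := irel ⟨n % m, Nat.mod_lt _ hm0⟩
    have h2 : finCycSucc (⟨n % m, Nat.mod_lt _ hm0⟩ : Fin m) = ⟨(n+1) % m, Nat.mod_lt _ hm0⟩ := by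
      apply Fin.ext
      show (n % m + 1) % m = (n+1) % m
      exact Nat.mod_add_mod n m 1
    rw [h2] at h1
    exact h1
  have H_eq_gs : ∀ n : ℕ, Hfun n = ArtinAux.gs (Hfun 0) (Hfun 1) n := by
    intro n
    induction n using Nat.twoStepInduction with
    | zero => simp
    | one => simp
    | more n _ ih1 =>
      have e1 := Hchain (n+1)
      have e2 := ArtinAux.gs_chain (Hfun 0) (Hfun 1) (n+1)
      rw [Hchain 0] at e2
      calc Hfun (n+2) = (Hfun (n+1))⁻¹ * (Hfun (n+1) * Hfun (n+2)) := by group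
        _ = (ArtinAux.gs (Hfun 0) (Hfun 1) (n+1))⁻¹
              * (ArtinAux.gs (Hfun 0) (Hfun 1) (n+1) * ArtinAux.gs (Hfun 0) (Hfun 1) (n+2)) := by
            rw [e1, ih1, ← e2]
        _ = ArtinAux.gs (Hfun 0) (Hfun 1) (n+2) := by group
  have Hm : Hfun m = Hfun 0 := by
    simp only [hHfun]
    exact congrArg (fun j : Fin m => (PresentedGroup.of (Sum.inl j) : PresentedGroup (IRels m)))
      (Fin.ext (by simp [Nat.mod_self]))
  have irelAlt : altWord (Hfun 0) (Hfun 1) m = altWord (Hfun 1) (Hfun 0) m := by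
    rw [ArtinAux.key]
    rw [← H_eq_gs m, Hm]
  -- the homomorphism φ : G → I
  have hφ : ∀ r ∈ Grels, FreeGroup.lift (fun i : Fin 2 => Hfun i.val) r = 1 := by
    intro r hr
    rw [hGrels, Set.mem_singleton_iff] at hr
    subst hr
    rw [map_mul, map_inv, mul_inv_eq_one, ArtinAux.map_altWord, ArtinAux.map_altWord]
    simp only [FreeGroup.lift_apply_of]
    exact irelAlt
  set φ : PresentedGroup Grels →* PresentedGroup (IRels m) := PresentedGroup.toGroup hφ with hφdef
  -- the homomorphism ψ : I → G
  have gsm : ArtinAux.gs A B m = A := (ArtinAux.key A B m).1 grel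
  have hψ : ∀ r ∈ IRels m,
      FreeGroup.lift (Sum.elim (fun i : Fin m => ArtinAux.gs A B i.val) (fun _ => A * B)) r = 1 := by
    rintro r ⟨i, rfl⟩
    rw [map_mul, map_inv, mul_inv_eq_one, map_mul]
    simp only [FreeGroup.lift_apply_of, Sum.elim_inl, Sum.elim_inr]
    show A * B = ArtinAux.gs A B i.val * ArtinAux.gs A B ((i.val + 1) % m)
    rcases lt_or_ge (i.val + 1) m with h | h
    · rw [Nat.mod_eq_of_lt h, ArtinAux.gs_chain]
    · have hlt := i.isLt
      have h1 : i.val + 1 = m := by omega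
      have h2 : (i.val + 1) % m = 0 := by rw [h1, Nat.mod_self]
      rw [h2]
      have h3 := ArtinAux.gs_chain A B i.val
      rw [h1, gsm] at h3
      rw [ArtinAux.gs_zero, ← h3]
  set ψ : PresentedGroup (IRels m) →* PresentedGroup Grels := PresentedGroup.toGroup hψ with hψdef
  refine ⟨MonoidHom.toMulEquiv φ ψ ?_ ?_⟩
  · apply PresentedGroup.ext
    intro x
    simp only [MonoidHom.comp_apply, MonoidHom.id_apply, hφdef, hψdef, PresentedGroup.toGroup.of]
    fin_cases x
    · show ψ (Hfun 0) = A
      simp only [hHfun, Nat.zero_mod]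
      rw [hψdef, PresentedGroup.toGroup.of]
      simp
    · show ψ (Hfun 1) = B
      simp only [hHfun, Nat.mod_eq_of_lt (show 1 < m by omega)]
      rw [hψdef, PresentedGroup.toGroup.of]
      simp
  · apply PresentedGroup.ext
    rintro (i | ⟨⟩)
    · simp only [MonoidHom.comp_apply, MonoidHom.id_apply, hψdef, PresentedGroup.toGroup.of,
        Sum.elim_inl]
      rw [ArtinAux.map_gs]
      have hφA : φ A = Hfun 0 := by rw [hA, hφdef, PresentedGroup.toGroup.of]; rfl
      have hφB : φ B = Hfun 1 := by rw [hB, hφdef, PresentedGroup.toGroup.of]; rfl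
      rw [hφA, hφB, ← H_eq_gs]
      simp only [hHfun]
      exact congrArg (fun j : Fin m => (PresentedGroup.of (Sum.inl j) : PresentedGroup (IRels m)))
        (Fin.ext (Nat.mod_eq_of_lt i.isLt))
    · simp only [MonoidHom.comp_apply, MonoidHom.id_apply, hψdef, PresentedGroup.toGroup.of,
        Sum.elim_inr, map_mul]
      have hφA : φ A = Hfun 0 := by rw [hA, hφdef, PresentedGroup.toGroup.of]; rfl
      have hφB : φ B = Hfun 1 := by rw [hB, hφdef, PresentedGroup.toGroup.of]; rfl
      rw [hφA, hφB, Hchain 0]
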